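/- The conditioned walk \widehat{S} is transient: started from any x \neq 0, it visits any fixed site only finitely many times almost surely. -/

import Mathlib

open Filter
open scoped Classical

/-- The two-dimensional integer lattice. -/
abbrev Z2 := ℤ × ℤ

/-- Euclidean norm on `Z2`. -/
noncomputable def nrm (x : Z2) : ℝ := Real.sqrt ((x.1 : ℝ) ^ 2 + (x.2 : ℝ) ^ 2)

/-- Nearest-neighbour relation on `Z2`. -/
def nbr (x y : Z2) : Prop := (x.1 - y.1).natAbs + (x.2 - y.2).natAbs = 1

/-- `srwP n x = P_x[S_n = 0]`, the n-step probability for the simple random walk on `Z2`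
to be at the origin, defined by first-step decomposition. -/
noncomputable def srwP : ℕ → Z2 → ℝ
  | 0, x => if x = 0 then 1 else 0
  | n + 1, x =>
      (srwP n (x + (1, 0)) + srwP n (x - (1, 0)) + srwP n (x + (0, 1)) + srwP n (x - (0, 1))) / 4

/-- `a` is the potential kernel of the 2D simple random walk:
`a x = ∑_{k=0}^∞ (P_0[S_k = 0] - P_x[S_k = 0])` (convergence of the series). -/
def IsPotentialKernel (a : Z2 → ℝ) : Prop :=
  ∀ x : Z2,
    Tendsto (fun N => ∑ k ∈ Finset.range N, (srwP k 0 - srwP k x)) atTop (nhds (a x))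

/-- Transition matrix of the conditioned walk `Ŝ` (Doob h-transform by `a`):
`P̂(x,y) = a(y) / (4 a(x))` when `x ∼ y`, `x ≠ 0`, `y ≠ 0`, and `0` otherwise. -/
noncomputable def Phat (a : Z2 → ℝ) (x y : Z2) : ℝ :=
  if nbr x y ∧ x ≠ 0 ∧ y ≠ 0 then a y / (4 * a x) else 0

/-- n-step transition probabilities of the conditioned walk. -/
noncomputable def phat (a : Z2 → ℝ) : ℕ → Z2 → Z2 → ℝ
  | 0, x, y => if x = y then 1 else 0
  | n + 1, x, y => ∑' z, Phat a x z * phat a n z y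

/-- Green's function of the conditioned walk: expected number of visits to `y` from `x`. -/
noncomputable def Ghat (a : Z2 → ℝ) (x y : Z2) : ℝ := ∑' n, phat a n x y

/-- `hitLE a A n x = P_x[τ̂_A ≤ n]` for the conditioned walk (entrance time, `τ̂_A = min{n ≥ 0 : Ŝ_n ∈ A}`). -/
noncomputable def hitLE (a : Z2 → ℝ) (A : Set Z2) : ℕ → Z2 → ℝ
  | 0, x => if x ∈ A then 1 else 0
  | n + 1, x => if x ∈ A then 1 else ∑' z, Phat a x z * hitLE a A n z

/-- `hitProb a A x = P_x[τ̂_A < ∞]` for the conditioned walk. -/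
noncomputable def hitProb (a : Z2 → ℝ) (A : Set Z2) (x : Z2) : ℝ := ⨆ n, hitLE a A n x

/-- `retLE a A n x = P_x[τ̂⁺_A ≤ n]`, where `τ̂⁺_A = min{n ≥ 1 : Ŝ_n ∈ A}`. -/
noncomputable def retLE (a : Z2 → ℝ) (A : Set Z2) : ℕ → Z2 → ℝ
  | 0, _ => 0
  | n + 1, x => ∑' z, Phat a x z * hitLE a A n z

/-- `retProb a A x = P_x[τ̂⁺_A < ∞]` for the conditioned walk. -/
noncomputable def retProb (a : Z2 → ℝ) (A : Set Z2) (x : Z2) : ℝ := ⨆ n, retLE a A n x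

/-- `beforeLE a A B n x = P_x[τ̂_A ≤ n and τ̂_A < τ̂_B]`. -/
noncomputable def beforeLE (a : Z2 → ℝ) (A B : Set Z2) : ℕ → Z2 → ℝ
  | 0, x => if x ∈ A then 1 else 0
  | n + 1, x =>
      if x ∈ A then 1 else if x ∈ B then 0 else ∑' z, Phat a x z * beforeLE a A B n z

/-- `beforeProb a A B x = P_x[τ̂_A < τ̂_B]` for the conditioned walk. -/
noncomputable def beforeProb (a : Z2 → ℝ) (A B : Set Z2) (x : Z2) : ℝ := ⨆ n, beforeLE a A B n x

/-- `entLE a A y n x = P_x[τ̂_A ≤ n, Ŝ_{τ̂_A} = y]`. -/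
noncomputable def entLE (a : Z2 → ℝ) (A : Set Z2) (y : Z2) : ℕ → Z2 → ℝ
  | 0, x => if x ∈ A ∧ x = y then 1 else 0
  | n + 1, x =>
      if x ∈ A then (if x = y then 1 else 0) else ∑' z, Phat a x z * entLE a A y n z

/-- `entProb a A y x = P_x[τ̂_A < ∞, Ŝ_{τ̂_A} = y]`. -/
noncomputable def entProb (a : Z2 → ℝ) (A : Set Z2) (y x : Z2) : ℝ := ⨆ n, entLE a A y n x

/-- `visitsGE a y n t x = P_x[#{0 ≤ j ≤ t : Ŝ_j = y} ≥ n]`. -/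
noncomputable def visitsGE (a : Z2 → ℝ) (y : Z2) : ℕ → ℕ → Z2 → ℝ
  | 0, _, _ => 1
  | n + 1, 0, x => if x = y ∧ n = 0 then 1 else 0
  | n + 1, t + 1, x =>
      if x = y then ∑' z, Phat a x z * visitsGE a y n t z
      else ∑' z, Phat a x z * visitsGE a y (n + 1) t z

/-- The symmetrized Green's function `ĝ(x,y) = Ĝ(x,y)/a(y)² = (a(x)+a(y)-a(x-y))/(a(x)a(y))`. -/
noncomputable def ghat (a : Z2 → ℝ) (x y : Z2) : ℝ := (a x + a y - a (x - y)) / (a x * a y)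

/-- The discrete disk `B(y, r)` in `Z2`. -/
def diskB (y : Z2) (r : ℝ) : Set Z2 := {z : Z2 | nrm (z - y) ≤ r}

/-- Inner boundary of a set of `Z2`. -/
def innerBd (A : Set Z2) : Set Z2 := {z : Z2 | z ∈ A ∧ ∃ w, nbr z w ∧ w ∉ A}

/-- Distance from a point to a set. -/
noncomputable def distSet (x : Z2) (A : Set Z2) : ℝ := sInf ((fun y => nrm (x - y)) '' A)

/-- Diameter of a set. -/
noncomputable def diamSet (A : Set Z2) : ℝ :=
  sSup ((fun p : Z2 × Z2 => nrm (p.1 - p.2)) '' (A ×ˢ A))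

/-- Escape probability from `y ∈ A` for the conditioned walk: `P_y[τ̂⁺_A = ∞]`. -/
noncomputable def hatEs (a : Z2 → ℝ) (A : Set Z2) (y : Z2) : ℝ :=
  if y ∈ A then 1 - retProb a A y else 0

/-- Capacity of a finite set for the conditioned walk. -/
noncomputable def hatCap (a : Z2 → ℝ) (A : Finset Z2) : ℝ :=
  ∑ y ∈ A, (a y) ^ 2 * hatEs a (↑A) y

/-- Harmonic measure of the conditioned walk on a finite set. -/
noncomputable def hatHm (a : Z2 → ℝ) (A : Finset Z2) (y : Z2) : ℝ :=
  (a y) ^ 2 * hatEs a (↑A) y / hatCap a A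

section SRW

@[simp] lemma srwP_zero (x : Z2) : srwP 0 x = if x = 0 then 1 else 0 := rfl

lemma srwP_succ (n : ℕ) (x : Z2) : srwP (n+1) x =
    (srwP n (x + (1, 0)) + srwP n (x - (1, 0)) + srwP n (x + (0, 1)) + srwP n (x - (0, 1))) / 4 := rfl

lemma srwP_nonneg (n : ℕ) (x : Z2) : 0 ≤ srwP n x := by
  induction n generalizing x with
  | zero => simp only [srwP_zero]; positivity
  | succ n ih => rw [srwP_succ]; have := ih (x + (1,0)); have := ih (x - (1,0));
                 have := ih (x + (0,1)); have := ih (x - (0,1)); linarith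

lemma srwP_le_one (n : ℕ) (x : Z2) : srwP n x ≤ 1 := by
  induction n generalizing x with
  | zero => simp only [srwP_zero]; split <;> norm_num
  | succ n ih => rw [srwP_succ]; have := ih (x + (1,0)); have := ih (x - (1,0));
                 have := ih (x + (0,1)); have := ih (x - (0,1)); linarith

lemma srwP_support {n : ℕ} {x : Z2} (h : n < x.1.natAbs + x.2.natAbs) : srwP n x = 0 := by
  induction n generalizing x with
  | zero =>
      rw [srwP_zero, if_neg]
      rintro rfl; simp at h
  | succ n ih =>
      rw [srwP_succ]
      rw [ih, ih, ih, ih]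
      · norm_num
      all_goals (simp only [Prod.fst_add, Prod.snd_add, Prod.fst_sub, Prod.snd_sub]
                 omega)

lemma srwP_parity {n : ℕ} {x : Z2} (h : ¬ ((n:ℤ) + x.1 + x.2) % 2 = 0) : srwP n x = 0 := by
  induction n generalizing x with
  | zero =>
      rw [srwP_zero, if_neg]
      rintro rfl; simp at h
  | succ n ih =>
      rw [srwP_succ, ih, ih, ih, ih]
      · norm_num
      all_goals (simp only [Prod.fst_add, Prod.snd_add, Prod.fst_sub, Prod.snd_sub]
                 push_cast at h ⊢
                 omega)

lemma srwP_neg (n : ℕ) (x : Z2) : srwP n (-x) = srwP n x := by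
  induction n generalizing x with
  | zero => simp [srwP_zero, neg_eq_zero]
  | succ n ih =>
      rw [srwP_succ, srwP_succ]
      have h1 : -x + (1,0) = -(x - (1,0)) := by ring
      have h2 : -x - (1,0) = -(x + (1,0)) := by ring
      have h3 : -x + (0,1) = -(x - (0,1)) := by ring
      have h4 : -x - (0,1) = -(x + (0,1)) := by ring
      rw [h1, h2, h3, h4, ih, ih, ih, ih]; ring

lemma srwP_swap (n : ℕ) (x : Z2) : srwP n (x.2, x.1) = srwP n x := by
  induction n generalizing x with
  | zero =>
      rw [srwP_zero, srwP_zero]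
      congr 1
      simp [Prod.ext_iff, and_comm]
  | succ n ih =>
      rw [srwP_succ, srwP_succ]
      have h1 : (x.2, x.1) + (1,0) = ((x + (0,1)).2, (x + (0,1)).1) := by simp [Prod.ext_iff]
      have h2 : (x.2, x.1) - (1,0) = ((x - (0,1)).2, (x - (0,1)).1) := by simp [Prod.ext_iff]
      have h3 : (x.2, x.1) + (0,1) = ((x + (1,0)).2, (x + (1,0)).1) := by simp [Prod.ext_iff]
      have h4 : (x.2, x.1) - (0,1) = ((x - (1,0)).2, (x - (1,0)).1) := by simp [Prod.ext_iff]
      rw [h1, h2, h3, h4, ih, ih, ih, ih]; ring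

lemma sum_srwP_le_one (n : ℕ) (F : Finset Z2) : ∑ x ∈ F, srwP n x ≤ 1 := by
  induction n generalizing F with
  | zero =>
      simp only [srwP_zero]
      rw [Finset.sum_ite_eq' F (0 : Z2) (fun _ => (1:ℝ))]
      split <;> norm_num
  | succ n ih =>
      have key : ∀ v : Z2, ∑ x ∈ F, srwP n (x + v) ≤ 1 := by
        intro v
        have : ∑ x ∈ F, srwP n (x + v) = ∑ x ∈ F.image (· + v), srwP n x := by
          rw [Finset.sum_image]
          intro x _ y _ h
          simpa using congrArg (· - v) h
        rw [this]; exact ih _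
      simp only [srwP_succ, sub_eq_add_neg]
      rw [← Finset.sum_div]
      rw [Finset.sum_add_distrib, Finset.sum_add_distrib, Finset.sum_add_distrib]
      have := key (1,0); have := key (-(1,0)); have := key (0,1); have := key (-(0,1))
      linarith

end SRW
section CK

/-- box finset -/
noncomputable def boxF (n : ℕ) : Finset Z2 := Finset.Icc (-(n:ℤ)) n ×ˢ Finset.Icc (-(n:ℤ)) n

lemma mem_boxF {n : ℕ} {z : Z2} (h : z.1.natAbs + z.2.natAbs ≤ n) : z ∈ boxF n := by
  simp only [boxF, Finset.mem_product, Finset.mem_Icc]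
  omega

lemma srwP_vanish {n : ℕ} {z : Z2} (h : z ∉ boxF n) : srwP n z = 0 := by
  apply srwP_support
  by_contra hc
  exact h (mem_boxF (by omega))

lemma summable_mul_srwP (n : ℕ) (g : Z2 → ℝ) : Summable (fun z => g z * srwP n z) := by
  apply summable_of_ne_finset_zero (s := boxF n)
  intro z hz
  rw [srwP_vanish hz, mul_zero]

lemma srwP_CK (m n : ℕ) (x : Z2) : srwP (m + n) x = ∑' z, srwP m (x - z) * srwP n z := by
  induction m generalizing x with
  | zero =>
      rw [zero_add]
      rw [tsum_eq_single x]
      · simp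
      · intro z hz
        rw [srwP_zero, if_neg (by intro h; exact hz (by linear_combination (norm := module) -h))]
        ring
  | succ m ih =>
      have hadd : m + 1 + n = (m + n) + 1 := by omega
      rw [hadd, srwP_succ]
      rw [ih (x + (1,0)), ih (x - (1,0)), ih (x + (0,1)), ih (x - (0,1))]
      have e1 : ∀ z : Z2, x + (1,0) - z = x - z + (1,0) := by intro z; ring
      have e2 : ∀ z : Z2, x - (1,0) - z = x - z - (1,0) := by intro z; ring
      have e3 : ∀ z : Z2, x + (0,1) - z = x - z + (0,1) := by intro z; ring
      have e4 : ∀ z : Z2, x - (0,1) - z = x - z - (0,1) := by intro z; ring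
      simp only [e1, e2, e3, e4]
      have s1 := summable_mul_srwP n (fun z => srwP m (x - z + (1,0)))
      have s2 := summable_mul_srwP n (fun z => srwP m (x - z - (1,0)))
      have s3 := summable_mul_srwP n (fun z => srwP m (x - z + (0,1)))
      have s4 := summable_mul_srwP n (fun z => srwP m (x - z - (0,1)))
      rw [← Summable.tsum_add s1 s2, ← Summable.tsum_add (s1.add s2) s3, ← Summable.tsum_add ((s1.add s2).add s3) s4,
        ← tsum_div_const]
      congr 1
      funext z
      rw [srwP_succ]
      ring

lemma srwP_even_le (j : ℕ) (x : Z2) : srwP (j + j) x ≤ srwP (j + j) 0 := by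
  have hA : srwP (j + j) 0 = ∑' w, srwP j w * srwP j w := by
    rw [srwP_CK j j 0]
    congr 1; funext w
    rw [show (0:Z2) - w = -w by ring, srwP_neg]
  have hC : srwP (j + j) x = ∑' w, srwP j w * srwP j (x - w) := by
    rw [srwP_CK j j x]
    congr 1; funext w; ring
  have hB : ∑' w, srwP j (x - w) * srwP j (x - w) = ∑' w, srwP j w * srwP j w := by
    exact (Equiv.subLeft x).tsum_eq (fun w => srwP j w * srwP j w)
  -- summabilities
  have sA : Summable (fun w => srwP j w * srwP j w) :=
    (summable_mul_srwP j _)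
  have sB : Summable (fun w : Z2 => srwP j (x - w) * srwP j (x - w)) := by
    have := (summable_mul_srwP j (fun w => srwP j w)).comp_injective
      (Equiv.subLeft x).injective
    exact this
  have sC : Summable (fun w => srwP j w * srwP j (x - w)) := by
    have := summable_mul_srwP j (fun w => srwP j (x - w))
    simpa [mul_comm] using this
  have key : 0 ≤ ∑' w, (srwP j w - srwP j (x - w))^2 :=
    tsum_nonneg (fun w => sq_nonneg _)
  have expand : ∑' w, (srwP j w - srwP j (x - w))^2
      = (∑' w, srwP j w * srwP j w) + (∑' w, srwP j (x - w) * srwP j (x - w))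
        - 2 * (∑' w, srwP j w * srwP j (x - w)) := by
    rw [← tsum_mul_left, ← Summable.tsum_add sA sB, ← Summable.tsum_sub (sA.add sB) (sC.mul_left 2)]
    congr 1; funext w; ring
  rw [expand, hB] at key
  rw [hA, hC]
  linarith

end CK
section Akernel

/-- partial sums of the potential kernel series -/
noncomputable def aPS (N : ℕ) (x : Z2) : ℝ := ∑ k ∈ Finset.range N, (srwP k 0 - srwP k x)

lemma aPS_nbr_identity (N : ℕ) (x : Z2) :
    aPS N (x + (1,0)) + aPS N (x - (1,0)) + aPS N (x + (0,1)) + aPS N (x - (0,1))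
      = 4 * aPS N x + 4 * ((if x = 0 then (1:ℝ) else 0) - srwP N x) := by
  induction N with
  | zero =>
      simp only [aPS, Finset.range_zero, Finset.sum_empty, srwP_zero]
      split <;> norm_num
  | succ N ih =>
      simp only [aPS, Finset.sum_range_succ] at ih ⊢
      have hx : srwP (N+1) x =
          (srwP N (x + (1, 0)) + srwP N (x - (1, 0)) + srwP N (x + (0, 1)) + srwP N (x - (0, 1))) / 4 :=
        srwP_succ N x
      linarith

lemma srwP_one_le_quarter (x : Z2) : srwP 1 x ≤ 1/4 := by
  obtain ⟨x1, x2⟩ := x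
  rw [srwP_succ]
  simp only [srwP_zero, Prod.mk_add_mk, Prod.mk_sub_mk, Prod.mk_eq_zero]
  norm_num
  split_ifs <;> norm_num <;> omega

variable {a : Z2 → ℝ} (ha : IsPotentialKernel a)

include ha

lemma ha' (x : Z2) : Tendsto (fun N => aPS N x) atTop (nhds (a x)) := ha x

lemma a_zero : a 0 = 0 := by
  have h0 : Tendsto (fun N => aPS N 0) atTop (nhds 0) := by
    have : (fun N => aPS N 0) = fun _ => (0:ℝ) := by
      funext N; simp [aPS]
    rw [this]; exact tendsto_const_nhds
  exact tendsto_nhds_unique (ha' ha 0) h0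

lemma a_neg (x : Z2) : a (-x) = a x := by
  have h0 : Tendsto (fun N => aPS N x) atTop (nhds (a (-x))) := by
    have : (fun N => aPS N x) = (fun N => aPS N (-x)) := by
      funext N; simp [aPS, srwP_neg]
    rw [this]; exact ha' ha _
  exact tendsto_nhds_unique h0 (ha' ha x)

lemma a_swap (x : Z2) : a (x.2, x.1) = a x := by
  have h0 : Tendsto (fun N => aPS N x) atTop (nhds (a (x.2, x.1))) := by
    have : (fun N => aPS N x) = (fun N => aPS N (x.2, x.1)) := by
      funext N; simp [aPS, srwP_swap]
    rw [this]; exact ha' ha _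
  exact tendsto_nhds_unique h0 (ha' ha x)

lemma srwP_tendsto_zero (x : Z2) : Tendsto (fun N => srwP N x) atTop (nhds 0) := by
  set L : ℝ := (if x = 0 then (1:ℝ) else 0)
      - (a (x + (1,0)) + a (x - (1,0)) + a (x + (0,1)) + a (x - (0,1)) - 4 * a x) / 4 with hL
  have key : Tendsto (fun N => srwP N x) atTop (nhds L) := by
    have h1 : Tendsto (fun N => (if x = 0 then (1:ℝ) else 0) -
        (aPS N (x + (1,0)) + aPS N (x - (1,0)) + aPS N (x + (0,1)) + aPS N (x - (0,1))
          - 4 * aPS N x) / 4) atTop (nhds L) := by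
      apply Tendsto.sub tendsto_const_nhds
      apply Tendsto.div_const
      apply Tendsto.sub _ (Tendsto.const_mul _ (ha' ha x))
      exact (((ha' ha _).add (ha' ha _)).add (ha' ha _)).add (ha' ha _)
    have h2 : ∀ N, srwP N x = (if x = 0 then (1:ℝ) else 0) -
        (aPS N (x + (1,0)) + aPS N (x - (1,0)) + aPS N (x + (0,1)) + aPS N (x - (0,1))
          - 4 * aPS N x) / 4 := by
      intro N
      have := aPS_nbr_identity N x
      linarith
    simpa only [← h2] using h1
  -- a subsequence of constant parity is 0, hence L = 0
  set r : ℕ := if (x.1 + x.2) % 2 = 0 then 1 else 0 with hr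
  have hsub : Tendsto (fun j : ℕ => srwP (2*j + r) x) atTop (nhds L) := by
    apply key.comp
    apply tendsto_atTop_mono _ tendsto_id
    intro j
    show j ≤ 2*j + r
    omega
  have hzero : (fun j : ℕ => srwP (2*j + r) x) = fun _ => (0:ℝ) := by
    funext j
    apply srwP_parity
    simp only [hr]
    split_ifs with h <;> push_cast <;> omega
  rw [hzero] at hsub
  have : L = 0 := tendsto_nhds_unique hsub tendsto_const_nhds
  rwa [this] at key

lemma a_harm (x : Z2) :
    a (x + (1,0)) + a (x - (1,0)) + a (x + (0,1)) + a (x - (0,1))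
      = 4 * a x + (if x = 0 then 4 else 0) := by
  have h1 : Tendsto (fun N => aPS N (x + (1,0)) + aPS N (x - (1,0)) + aPS N (x + (0,1))
      + aPS N (x - (0,1))) atTop
      (nhds (a (x + (1,0)) + a (x - (1,0)) + a (x + (0,1)) + a (x - (0,1)))) :=
    (((ha' ha _).add (ha' ha _)).add (ha' ha _)).add (ha' ha _)
  have h2 : Tendsto (fun N => 4 * aPS N x + 4 * ((if x = 0 then (1:ℝ) else 0) - srwP N x))
      atTop (nhds (4 * a x + 4 * ((if x = 0 then (1:ℝ) else 0) - 0))) := by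
    exact Tendsto.add (Tendsto.const_mul _ (ha' ha x))
      (Tendsto.const_mul _ (Tendsto.sub tendsto_const_nhds (srwP_tendsto_zero ha x)))
  have h3 := tendsto_nhds_unique (by simpa only [aPS_nbr_identity] using h1) h2
  rw [h3]
  split <;> norm_num

lemma a_e1 : a (1,0) = 1 := by
  have h := a_harm ha 0
  have e1 : (0:Z2) + (1,0) = (1,0) := by norm_num
  have e2 : (0:Z2) - (1,0) = -(1,0) := by ring
  have e3 : (0:Z2) + (0,1) = (0,1) := by norm_num
  have e4 : (0:Z2) - (0,1) = -(0,1) := by ring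
  rw [e1, e2, e3, e4, a_neg ha, a_neg ha, a_zero ha, if_pos rfl] at h
  have hs : a (0,1) = a (1,0) := by
    have := a_swap ha ((1,0) : Z2); simpa using this
  rw [hs] at h
  linarith

lemma a_nbr0 (v : Z2) (h : v.1.natAbs + v.2.natAbs = 1) : a v = 1 := by
  have h1 : v = (1,0) ∨ v = (-1,0) ∨ v = (0,1) ∨ v = (0,-1) := by
    rcases v with ⟨v1, v2⟩
    simp only [Prod.mk.injEq]
    omega
  have hs : a (0,1) = a (1,0) := by
    have := a_swap ha ((1,0) : Z2); simpa using this
  rcases h1 with rfl | rfl | rfl | rfl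
  · exact a_e1 ha
  · rw [show ((-1,0) : Z2) = -(1,0) by norm_num [Prod.ext_iff], a_neg ha]; exact a_e1 ha
  · rw [hs]; exact a_e1 ha
  · rw [show ((0,-1) : Z2) = -(0,1) by norm_num [Prod.ext_iff], a_neg ha, hs]; exact a_e1 ha

lemma a_ge (x : Z2) (hx : x ≠ 0) : 3/4 ≤ a x := by
  have hbound : ∀ N, 2 ≤ N → 3/4 ≤ aPS N x := by
    have heven : ∀ j : ℕ, srwP (2*j) x ≤ srwP (2*j) 0 := by
      intro j
      have := srwP_even_le j x
      rwa [show j + j = 2*j by omega] at this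
    by_cases hpar : (x.1 + x.2) % 2 = 0
    -- even case: all terms nonneg, first term is 1
    · have hterm : ∀ k, 0 ≤ srwP k 0 - srwP k x := by
        intro k
        rcases Nat.even_or_odd k with ⟨j, hj⟩ | ⟨j, hj⟩
        · subst hj
          have := srwP_even_le j x
          linarith
        · subst hj
          rw [srwP_parity (n := 2*j+1) (x := x) (by push_cast; omega),
              srwP_parity (n := 2*j+1) (x := (0:Z2)) (by simp only [Prod.fst_zero, Prod.snd_zero]; push_cast; omega)]
          norm_num
      intro N hN
      have h0 : srwP 0 0 - srwP 0 x = 1 := by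
        simp [srwP_zero, hx]
      calc (3:ℝ)/4 ≤ srwP 0 0 - srwP 0 x := by rw [h0]; norm_num
        _ ≤ aPS N x := by
            apply Finset.single_le_sum (f := fun k => srwP k 0 - srwP k x)
              (fun k _ => hterm k)
            simp; omega
    -- odd case: pair consecutive terms
    · have hOdd0 : ∀ j, srwP (2*j) x = 0 := fun j =>
        srwP_parity (n := 2*j) (x := x) (by push_cast; omega)
      have hOdd1 : ∀ j, srwP (2*j+1) (0:Z2) = 0 := fun j =>
        srwP_parity (n := 2*j+1) (x := (0:Z2)) (by simp only [Prod.fst_zero, Prod.snd_zero]; push_cast; omega)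
      have heven2 : ∀ j (z : Z2), srwP (2*j) z ≤ srwP (2*j) 0 := by
        intro j z
        have := srwP_even_le j z
        rwa [show j + j = 2*j by omega] at this
      have hstep : ∀ j, srwP (2*j+1) x ≤ srwP (2*j) 0 := by
        intro j
        rw [srwP_succ]
        have h1 := heven2 j (x + (1,0))
        have h2 := heven2 j (x - (1,0))
        have h3 := heven2 j (x + (0,1))
        have h4 := heven2 j (x - (0,1))
        linarith
      have hpair : ∀ J, 1 ≤ J → 3/4 ≤ aPS (2*J) x := by
        intro J hJ
        induction J, hJ using Nat.le_induction with
        | base =>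
            have h10 : srwP 1 (0:Z2) = 0 := srwP_parity (by norm_num)
            have h0x : srwP 0 x = 0 := by simp [srwP_zero, hx]
            have hq := srwP_one_le_quarter x
            simp only [aPS, show 2*1 = 2 by norm_num, Finset.sum_range_succ,
              Finset.sum_range_one, h10, h0x]
            simp [srwP_zero]
            linarith
        | succ J hJ ih =>
            have hrw : 2*(J+1) = (2*J + 1) + 1 := by omega
            rw [hrw]
            simp only [aPS, Finset.sum_range_succ] at ih ⊢
            have e0 := hOdd0 J
            have e1 := hOdd1 J
            have e2 := hstep J
            have e3 := hOdd0 (J+1)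
            linarith [srwP_nonneg (2*J) (0:Z2)]
      intro N hN
      rcases Nat.even_or_odd N with ⟨J, hJ⟩ | ⟨J, hJ⟩
      · subst hJ
        have : 1 ≤ J := by omega
        have := hpair J this
        rwa [show 2*J = J + J by omega] at this
      · subst hJ
        have hJ1 : 1 ≤ J := by omega
        have := hpair J hJ1
        have e0 := hOdd0 J
        simp only [aPS, Finset.sum_range_succ] at *
        linarith [srwP_nonneg (2*J) (0:Z2)]
  exact ge_of_tendsto (ha' ha x) (Filter.eventually_atTop.2 ⟨2, hbound⟩)

end Akernel
section PhatLayer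

variable {a : Z2 → ℝ} (ha : IsPotentialKernel a)

/-- the neighbours of x as a finset -/
def nb (x : Z2) : Finset Z2 := {x + (1,0), x - (1,0), x + (0,1), x - (0,1)}

lemma sum_nb (x : Z2) (f : Z2 → ℝ) :
    ∑ z ∈ nb x, f z = f (x + (1,0)) + f (x - (1,0)) + f (x + (0,1)) + f (x - (0,1)) := by
  have d12 : x + (1,0) ≠ x - (1,0) := by
    intro h; rw [Prod.ext_iff] at h; simp at h; try omega
  have d13 : x + (1,0) ≠ x + (0,1) := by
    intro h; rw [Prod.ext_iff] at h; simp at h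
  have d14 : x + (1,0) ≠ x - (0,1) := by
    intro h; rw [Prod.ext_iff] at h; simp at h; try omega
  have d23 : x - (1,0) ≠ x + (0,1) := by
    intro h; rw [Prod.ext_iff] at h; simp at h; try omega
  have d24 : x - (1,0) ≠ x - (0,1) := by
    intro h; rw [Prod.ext_iff] at h; simp at h; try omega
  have d34 : x + (0,1) ≠ x - (0,1) := by
    intro h; rw [Prod.ext_iff] at h; simp at h; try omega
  simp only [nb]
  rw [Finset.sum_insert (by simp [d12, d13, d14]),
      Finset.sum_insert (by simp [d23, d24]),
      Finset.sum_insert (by simp [d34]),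
      Finset.sum_singleton]
  ring

lemma mem_nb_of_nbr {x z : Z2} (h : nbr x z) : z ∈ nb x := by
  rcases x with ⟨x1, x2⟩; rcases z with ⟨z1, z2⟩
  unfold nbr at h
  simp only [nb, Finset.mem_insert, Finset.mem_singleton, Prod.mk_add_mk, Prod.mk_sub_mk,
    Prod.mk.injEq]
  simp only [] at h
  omega

lemma nbr_of_mem_nb {x z : Z2} (h : z ∈ nb x) : nbr x z := by
  rcases x with ⟨x1, x2⟩; rcases z with ⟨z1, z2⟩
  simp only [nb, Finset.mem_insert, Finset.mem_singleton, Prod.mk_add_mk, Prod.mk_sub_mk,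
    Prod.mk.injEq] at h
  unfold nbr
  simp only []
  omega

lemma Phat_vanish {x z : Z2} (h : z ∉ nb x) : Phat a x z = 0 := by
  rw [Phat, if_neg]
  rintro ⟨h1, -, -⟩
  exact h (mem_nb_of_nbr h1)

lemma tsum_phat_mul (x : Z2) (F : Z2 → ℝ) :
    ∑' z, Phat a x z * F z = ∑ z ∈ nb x, Phat a x z * F z := by
  apply tsum_eq_sum
  intro z hz
  rw [Phat_vanish hz, zero_mul]

include ha

lemma a_nonneg (x : Z2) : 0 ≤ a x := by
  by_cases hx : x = 0
  · rw [hx, a_zero ha]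
  · linarith [a_ge ha x hx]

lemma a_pos {x : Z2} (hx : x ≠ 0) : 0 < a x := by linarith [a_ge ha x hx]

lemma Phat_nonneg (x z : Z2) : 0 ≤ Phat a x z := by
  rw [Phat]
  split
  · rename_i h
    have := a_nonneg ha z
    have := a_pos ha h.2.1
    positivity
  · exact le_refl _

lemma Phat_eq {x z : Z2} (hx : x ≠ 0) (hz : z ∈ nb x) :
    Phat a x z = a z / (4 * a x) := by
  by_cases hz0 : z = 0
  · rw [hz0, Phat, a_zero ha, if_neg]
    · norm_num
    · rintro ⟨-, -, h⟩; exact h rfl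
  · rw [Phat, if_pos ⟨nbr_of_mem_nb hz, hx, hz0⟩]

lemma Phat_rowsum {x : Z2} (hx : x ≠ 0) : ∑ z ∈ nb x, Phat a x z = 1 := by
  have hrw : ∀ z ∈ nb x, Phat a x z = a z / (4 * a x) := fun z hz => Phat_eq ha hx hz
  rw [Finset.sum_congr rfl hrw, sum_nb]
  have h := a_harm ha x
  rw [if_neg hx] at h
  have hax : a x ≠ 0 := ne_of_gt (a_pos ha hx)
  field_simp
  linarith

lemma Phat_rowsum_le (x : Z2) : ∑ z ∈ nb x, Phat a x z ≤ 1 := by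
  by_cases hx : x = 0
  · subst hx
    have : ∀ z ∈ nb (0:Z2), Phat a 0 z = 0 := by
      intro z _
      rw [Phat, if_neg]; rintro ⟨-, h, -⟩; exact h rfl
    rw [Finset.sum_congr rfl this]
    simp
  · rw [Phat_rowsum ha hx]

omit ha in
lemma Phat_zero_left (z : Z2) : Phat a 0 z = 0 := by
  rw [Phat, if_neg]; rintro ⟨-, h, -⟩; exact h rfl

omit ha in
lemma phat_succ_sum (n : ℕ) (x y : Z2) :
    phat a (n+1) x y = ∑ z ∈ nb x, Phat a x z * phat a n z y := by
  rw [show phat a (n+1) x y = ∑' z, Phat a x z * phat a n z y from rfl]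
  exact tsum_phat_mul x _

lemma phat_nonneg (n : ℕ) (x y : Z2) : 0 ≤ phat a n x y := by
  induction n generalizing x y with
  | zero => rw [show phat a 0 x y = if x = y then 1 else 0 from rfl]; split <;> norm_num
  | succ n ih =>
      rw [phat_succ_sum]
      apply Finset.sum_nonneg
      intro z _
      exact mul_nonneg (Phat_nonneg ha x z) (ih z y)

omit ha in
lemma phat_zero_left {y : Z2} (hy : y ≠ 0) (n : ℕ) : phat a n 0 y = 0 := by
  cases n with
  | zero => rw [show phat a 0 0 y = if (0:Z2) = y then 1 else 0 from rfl, if_neg (by exact fun h => hy h.symm)]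
  | succ n =>
      rw [phat_succ_sum]
      apply Finset.sum_eq_zero
      intro z _
      rw [Phat_zero_left, zero_mul]

lemma phat_sandwich (s t : ℕ) (x w z : Z2) :
    phat a s x w * phat a t w z ≤ phat a (s + t) x z := by
  induction s generalizing x with
  | zero =>
      rw [show phat a 0 x w = if x = w then 1 else 0 from rfl]
      split
      · rename_i h; subst h; rw [zero_add, one_mul]
      · rw [zero_mul]; exact phat_nonneg ha _ _ _
  | succ s ih =>
      have hrw : s + 1 + t = (s + t) + 1 := by omega
      rw [hrw, phat_succ_sum, phat_succ_sum]
      rw [Finset.sum_mul]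
      apply Finset.sum_le_sum
      intro v _
      rw [mul_assoc]
      exact mul_le_mul_of_nonneg_left (ih v) (Phat_nonneg ha x v)

omit ha in
lemma phat_one (x z : Z2) : phat a 1 x z = Phat a x z := by
  rw [show phat a 1 x z = ∑' w, Phat a x w * phat a 0 w z from rfl]
  rw [tsum_eq_single z]
  · rw [show phat a 0 z z = if z = z then 1 else 0 from rfl, if_pos rfl, mul_one]
  · intro w hw
    rw [show phat a 0 w z = if w = z then 1 else 0 from rfl, if_neg hw, mul_zero]

omit ha in
lemma Phat_zero_right (x : Z2) : Phat a x 0 = 0 := by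
  rw [Phat, if_neg]; rintro ⟨-, -, h⟩; exact h rfl

/-- Green's function bound at a neighbour of the origin. -/
lemma green_e (N : ℕ) (x : Z2) :
    ∑ n ∈ Finset.range (N+1), phat a n x (1,0) ≤ 4 / a x := by
  induction N generalizing x with
  | zero =>
      rw [Finset.sum_range_one, show phat a 0 x (1,0) = if x = (1,0) then 1 else 0 from rfl]
      split
      · rename_i h; subst h; rw [a_e1 ha]; norm_num
      · have := a_nonneg ha x; positivity
  | succ N ih =>
      by_cases hx : x = 0
      · subst hx
        have hz : ∀ n ∈ Finset.range (N+2), phat a n 0 (1,0) = 0 := by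
          intro n _
          exact phat_zero_left (by norm_num [Prod.ext_iff]) n
        rw [Finset.sum_congr rfl hz, Finset.sum_const_zero]
        rw [a_zero ha]
        norm_num
      · have hax : 0 < a x := a_pos ha hx
        have bound1 : ∀ z, Phat a x z * (4 / a z) ≤ 1 / a x := by
          intro z
          rw [Phat]
          split
          · rename_i h
            have haz : 0 < a z := a_pos ha h.2.2
            have : a z / (4 * a x) * (4 / a z) = 1 / a x := by
              field_simp
            rw [this]
          · rw [zero_mul]
            positivity
        have key : ∑ n ∈ Finset.range (N+1+1), phat a n x (1,0)
            = ∑ z ∈ nb x, Phat a x z *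
              (∑ n ∈ Finset.range (N+1), phat a n z (1,0)) + phat a 0 x (1,0) := by
          rw [Finset.sum_range_succ']
          congr 1
          have h1 : ∀ k ∈ Finset.range (N+1), phat a (k+1) x (1,0)
              = ∑ z ∈ nb x, Phat a x z * phat a k z (1,0) := fun k _ => phat_succ_sum _ _ _
          rw [Finset.sum_congr rfl h1, Finset.sum_comm]
          apply Finset.sum_congr rfl
          intro z _
          rw [Finset.mul_sum]
        rw [key]
        have hsum_le : ∑ z ∈ nb x, Phat a x z * (∑ n ∈ Finset.range (N+1), phat a n z (1,0))
            ≤ ∑ z ∈ nb x, Phat a x z * (4 / a z) := by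
          apply Finset.sum_le_sum
          intro z _
          exact mul_le_mul_of_nonneg_left (ih z) (Phat_nonneg ha x z)
        by_cases hxe : x = (1,0)
        · subst hxe
          rw [show phat a 0 (1,0) (1,0) = if ((1,0):Z2) = (1,0) then 1 else 0 from rfl,
            if_pos rfl]
          have hS : ∑ z ∈ nb (1,0), Phat a (1,0) z * (4 / a z) ≤ 3 := by
            rw [sum_nb]
            have h0 : ((1,0):Z2) - (1,0) = 0 := sub_self _
            rw [h0, Phat_zero_right, zero_mul]
            have b1 := bound1 ((1,0) + (1,0) : Z2)
            have b3 := bound1 ((1,0) + (0,1) : Z2)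
            have b4 := bound1 ((1,0) - (0,1) : Z2)
            rw [a_e1 ha] at b1 b3 b4
            norm_num at b1 b3 b4 ⊢
            linarith
          rw [a_e1 ha]
          norm_num
          linarith [hsum_le, hS]
        · rw [show phat a 0 x (1,0) = if x = (1,0) then 1 else 0 from rfl, if_neg hxe]
          have hS : ∑ z ∈ nb x, Phat a x z * (4 / a z) ≤ 4 / a x := by
            calc ∑ z ∈ nb x, Phat a x z * (4 / a z) ≤ ∑ z ∈ nb x, 1 / a x :=
                  Finset.sum_le_sum (fun z _ => bound1 z)
              _ = 4 / a x := by rw [sum_nb]; ring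
          linarith [hsum_le, hS]

end PhatLayer
section Irred

variable {a : Z2 → ℝ} (ha : IsPotentialKernel a)

/-- mutual accessibility to/from (1,0) -/
def good (a : Z2 → ℝ) (y : Z2) : Prop :=
  (∃ k, 0 < phat a k (1,0) y) ∧ (∃ m, 0 < phat a m y (1,0))

lemma nbr_symm {x y : Z2} (h : nbr x y) : nbr y x := by
  unfold nbr at *; omega

include ha

lemma Phat_pos {x z : Z2} (hx : x ≠ 0) (hz : z ≠ 0) (hn : nbr x z) : 0 < Phat a x z := by
  rw [Phat, if_pos ⟨hn, hx, hz⟩]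
  exact div_pos (a_pos ha hz) (by linarith [a_pos ha hx])

lemma good_step {z y : Z2} (hg : good a z) (hn : nbr z y) (hz : z ≠ 0) (hy : y ≠ 0) :
    good a y := by
  obtain ⟨⟨k, hk⟩, ⟨m, hm⟩⟩ := hg
  constructor
  · refine ⟨k + 1, lt_of_lt_of_le ?_ (phat_sandwich ha k 1 (1,0) z y)⟩
    rw [phat_one]
    exact mul_pos hk (Phat_pos ha hz hy hn)
  · refine ⟨1 + m, lt_of_lt_of_le ?_ (phat_sandwich ha 1 m y z (1,0))⟩
    rw [phat_one]
    exact mul_pos (Phat_pos ha hy hz (nbr_symm hn)) hm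

omit ha in
lemma good_e : good a (1,0) :=
  ⟨⟨0, by rw [show phat a 0 (1,0) (1,0) = if ((1,0):Z2) = (1,0) then 1 else 0 from rfl, if_pos rfl]; norm_num⟩,
   ⟨0, by rw [show phat a 0 (1,0) (1,0) = if ((1,0):Z2) = (1,0) then 1 else 0 from rfl, if_pos rfl]; norm_num⟩⟩

lemma reach (y : Z2) (hy : y ≠ 0) : good a y := by
  have main : ∀ d : ℕ, ∀ y : Z2, y ≠ 0 → y.1.natAbs + y.2.natAbs = d → good a y := by
    intro d
    induction d using Nat.strong_induction_on with
    | _ d ih =>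
      intro y hy hd
      rcases y with ⟨y1, y2⟩
      have hne : ¬(y1 = 0 ∧ y2 = 0) := by
        intro ⟨h1, h2⟩; exact hy (by simp [Prod.ext_iff, h1, h2])
      simp only [] at hd
      match d, hd with
      | 0, hd => omega
      | 1, hd =>
          have hcases : ((y1,y2) : Z2) = (1,0) ∨ ((y1,y2) : Z2) = (-1,0)
              ∨ ((y1,y2) : Z2) = (0,1) ∨ ((y1,y2) : Z2) = (0,-1) := by
            simp only [Prod.mk.injEq]
            omega
          have g1 : good a (1,0) := good_e
          have g11 : good a (1,1) := good_step ha g1 (by unfold nbr; norm_num) (by norm_num [Prod.ext_iff]) (by norm_num [Prod.ext_iff])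
          have g01 : good a (0,1) := good_step ha g11 (by unfold nbr; norm_num) (by norm_num [Prod.ext_iff]) (by norm_num [Prod.ext_iff])
          have gm11 : good a (-1,1) := good_step ha g01 (by unfold nbr; norm_num) (by norm_num [Prod.ext_iff]) (by norm_num [Prod.ext_iff])
          have gm10 : good a (-1,0) := good_step ha gm11 (by unfold nbr; norm_num) (by norm_num [Prod.ext_iff]) (by norm_num [Prod.ext_iff])
          have g1m1 : good a (1,-1) := good_step ha g1 (by unfold nbr; norm_num) (by norm_num [Prod.ext_iff]) (by norm_num [Prod.ext_iff])
          have g0m1 : good a (0,-1) := good_step ha g1m1 (by unfold nbr; norm_num) (by norm_num [Prod.ext_iff]) (by norm_num [Prod.ext_iff])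
          rcases hcases with h | h | h | h <;> rw [h] <;> assumption
      | (n+2), hd =>
          -- pick a neighbour closer to the origin
          have : ∃ z : Z2, z ≠ 0 ∧ nbr z (y1,y2) ∧ z.1.natAbs + z.2.natAbs = n + 1 := by
            by_cases h1 : y1 > 0
            · exact ⟨(y1 - 1, y2), by simp [Prod.ext_iff]; try omega, by unfold nbr; simp; try omega,
                by simp; try omega⟩
            · by_cases h2 : y1 < 0
              · exact ⟨(y1 + 1, y2), by simp [Prod.ext_iff]; try omega, by unfold nbr; simp; try omega,
                  by simp; try omega⟩
              · by_cases h3 : y2 > 0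
                · exact ⟨(y1, y2 - 1), by simp [Prod.ext_iff]; try omega, by unfold nbr; simp; try omega,
                    by simp; try omega⟩
                · exact ⟨(y1, y2 + 1), by simp [Prod.ext_iff]; try omega, by unfold nbr; simp; try omega,
                    by simp; try omega⟩
          obtain ⟨z, hz0, hzn, hzd⟩ := this
          exact good_step ha (ih (n+1) (by omega) z hz0 hzd) hzn hz0 hy
  exact main _ y hy rfl

lemma green_y (y : Z2) (hy : y ≠ 0) :
    ∃ K : ℝ, 1 ≤ K ∧ ∀ N, ∑ n ∈ Finset.range (N+1), phat a n y y ≤ K := by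
  obtain ⟨⟨k, hk⟩, ⟨m, hm⟩⟩ := reach ha y hy
  set δ : ℝ := phat a k (1,0) y * phat a m y (1,0) with hδ
  have hδpos : 0 < δ := mul_pos hk hm
  refine ⟨max 1 (4 / δ), le_max_left _ _, fun N => ?_⟩
  have key : ∀ n, δ * phat a n y y ≤ phat a (k + n + m) (1,0) (1,0) := by
    intro n
    have h1 : phat a k (1,0) y * phat a n y y ≤ phat a (k+n) (1,0) y :=
      phat_sandwich ha k n (1,0) y y
    have h2 : phat a (k+n) (1,0) y * phat a m y (1,0) ≤ phat a (k+n+m) (1,0) (1,0) :=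
      phat_sandwich ha (k+n) m (1,0) y (1,0)
    have hmn : 0 ≤ phat a m y (1,0) := phat_nonneg ha m y (1,0)
    calc δ * phat a n y y = (phat a k (1,0) y * phat a n y y) * phat a m y (1,0) := by ring
      _ ≤ phat a (k+n) (1,0) y * phat a m y (1,0) := mul_le_mul_of_nonneg_right h1 hmn
      _ ≤ _ := h2
  have hshift : ∑ n ∈ Finset.range (N+1), phat a (k + n + m) (1,0) (1,0)
      ≤ ∑ j ∈ Finset.range (k+N+m+1), phat a j (1,0) (1,0) := by
    have himg : ∑ n ∈ Finset.range (N+1), phat a (k + n + m) (1,0) (1,0)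
        = ∑ j ∈ (Finset.range (N+1)).image (fun n => k + n + m), phat a j (1,0) (1,0) := by
      rw [Finset.sum_image]
      intro n _ n' _ h
      dsimp only at h
      omega
    rw [himg]
    apply Finset.sum_le_sum_of_subset_of_nonneg
    · intro j hj
      simp only [Finset.mem_image, Finset.mem_range] at hj ⊢
      obtain ⟨n, hn, rfl⟩ := hj
      omega
    · intro j _ _
      exact phat_nonneg ha j _ _
  have htot : δ * ∑ n ∈ Finset.range (N+1), phat a n y y ≤ 4 := by
    rw [Finset.mul_sum]
    calc ∑ n ∈ Finset.range (N+1), δ * phat a n y y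
        ≤ ∑ n ∈ Finset.range (N+1), phat a (k + n + m) (1,0) (1,0) :=
          Finset.sum_le_sum (fun n _ => key n)
      _ ≤ ∑ j ∈ Finset.range (k+N+m+1), phat a j (1,0) (1,0) := hshift
      _ ≤ 4 / a (1,0) := green_e ha _ _
      _ = 4 := by rw [a_e1 ha]; norm_num
  have : ∑ n ∈ Finset.range (N+1), phat a n y y ≤ 4 / δ := by
    rw [le_div_iff₀ hδpos]
    linarith
  exact le_trans this (le_max_right _ _)

end Irred
section HitLayer

variable {a : Z2 → ℝ} (ha : IsPotentialKernel a)

lemma hitLE_zero (A : Set Z2) (x : Z2) : hitLE a A 0 x = if x ∈ A then 1 else 0 := rfl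

lemma hitLE_succ (A : Set Z2) (n : ℕ) (x : Z2) :
    hitLE a A (n+1) x = if x ∈ A then 1 else ∑ z ∈ nb x, Phat a x z * hitLE a A n z := by
  rw [show hitLE a A (n+1) x = if x ∈ A then 1 else ∑' z, Phat a x z * hitLE a A n z from rfl]
  congr 1
  exact tsum_phat_mul x _

lemma hitLE_mem (A : Set Z2) (n : ℕ) {x : Z2} (hx : x ∈ A) : hitLE a A n x = 1 := by
  cases n with
  | zero => rw [hitLE_zero, if_pos hx]
  | succ n => rw [hitLE_succ, if_pos hx]

include ha

lemma hitLE_nonneg (A : Set Z2) (n : ℕ) (x : Z2) : 0 ≤ hitLE a A n x := by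
  induction n generalizing x with
  | zero => rw [hitLE_zero]; split <;> norm_num
  | succ n ih =>
      rw [hitLE_succ]
      split
      · norm_num
      · exact Finset.sum_nonneg fun z _ => mul_nonneg (Phat_nonneg ha x z) (ih z)

lemma hitLE_le_one (A : Set Z2) (n : ℕ) (x : Z2) : hitLE a A n x ≤ 1 := by
  induction n generalizing x with
  | zero => rw [hitLE_zero]; split <;> norm_num
  | succ n ih =>
      rw [hitLE_succ]
      split
      · exact le_refl _
      · calc ∑ z ∈ nb x, Phat a x z * hitLE a A n z
            ≤ ∑ z ∈ nb x, Phat a x z * 1 :=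
              Finset.sum_le_sum fun z _ => mul_le_mul_of_nonneg_left (ih z) (Phat_nonneg ha x z)
          _ = ∑ z ∈ nb x, Phat a x z := by simp
          _ ≤ 1 := Phat_rowsum_le ha x

lemma hitLE_mono (A : Set Z2) (n : ℕ) (x : Z2) : hitLE a A n x ≤ hitLE a A (n+1) x := by
  induction n generalizing x with
  | zero =>
      rw [hitLE_zero, hitLE_succ]
      split
      · exact le_refl _
      · exact Finset.sum_nonneg fun z _ =>
          mul_nonneg (Phat_nonneg ha x z) (hitLE_nonneg ha A 0 z)
  | succ n ih =>
      rw [hitLE_succ, hitLE_succ]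
      split
      · exact le_refl _
      · exact Finset.sum_le_sum fun z _ => mul_le_mul_of_nonneg_left (ih z) (Phat_nonneg ha x z)

lemma hitLE_monotone (A : Set Z2) (x : Z2) : Monotone (fun n => hitLE a A n x) :=
  monotone_nat_of_le_succ (fun n => hitLE_mono ha A n x)

lemma hitLE_bdd (A : Set Z2) (x : Z2) : BddAbove (Set.range fun n => hitLE a A n x) :=
  ⟨1, by rintro r ⟨n, rfl⟩; exact hitLE_le_one ha A n x⟩

lemma hitProb_tendsto (A : Set Z2) (x : Z2) :
    Tendsto (fun n => hitLE a A n x) atTop (nhds (hitProb a A x)) :=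
  tendsto_atTop_ciSup (hitLE_monotone ha A x) (hitLE_bdd ha A x)

lemma hitProb_nonneg (A : Set Z2) (x : Z2) : 0 ≤ hitProb a A x :=
  le_trans (hitLE_nonneg ha A 0 x) (le_ciSup (hitLE_bdd ha A x) 0)

lemma hitProb_le_one (A : Set Z2) (x : Z2) : hitProb a A x ≤ 1 :=
  ciSup_le fun n => hitLE_le_one ha A n x

lemma hitProb_mem (A : Set Z2) {x : Z2} (hx : x ∈ A) : hitProb a A x = 1 := by
  have : (fun n => hitLE a A n x) = fun _ => (1:ℝ) := funext fun n => hitLE_mem A n hx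
  rw [hitProb, this]
  exact ciSup_const

lemma hitProb_harm (A : Set Z2) {x : Z2} (hx : x ∉ A) :
    hitProb a A x = ∑ z ∈ nb x, Phat a x z * hitProb a A z := by
  have t1 : Tendsto (fun n => hitLE a A (n+1) x) atTop (nhds (hitProb a A x)) :=
    (hitProb_tendsto ha A x).comp (tendsto_add_atTop_nat 1)
  have t2 : Tendsto (fun n => ∑ z ∈ nb x, Phat a x z * hitLE a A n z) atTop
      (nhds (∑ z ∈ nb x, Phat a x z * hitProb a A z)) := by
    apply tendsto_finset_sum
    intro z _
    exact (hitProb_tendsto ha A z).const_mul _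
  have heq : (fun n => hitLE a A (n+1) x) = fun n => ∑ z ∈ nb x, Phat a x z * hitLE a A n z := by
    funext n
    rw [hitLE_succ, if_neg hx]
  rw [heq] at t1
  exact tendsto_nhds_unique t1 t2

omit ha

lemma retLE_succ (A : Set Z2) (n : ℕ) (x : Z2) :
    retLE a A (n+1) x = ∑ z ∈ nb x, Phat a x z * hitLE a A n z := by
  rw [show retLE a A (n+1) x = ∑' z, Phat a x z * hitLE a A n z from rfl]
  exact tsum_phat_mul x _

end HitLayer

section VisitLayer

variable {a : Z2 → ℝ} (ha : IsPotentialKernel a) {y : Z2}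

lemma v_zero (t : ℕ) (x : Z2) : visitsGE a y 0 t x = 1 := by cases t <;> rfl

lemma v_succ_zero (n : ℕ) (x : Z2) :
    visitsGE a y (n+1) 0 x = if x = y ∧ n = 0 then 1 else 0 := rfl

lemma v_succ_succ (n t : ℕ) (x : Z2) :
    visitsGE a y (n+1) (t+1) x = if x = y
      then ∑ z ∈ nb x, Phat a x z * visitsGE a y n t z
      else ∑ z ∈ nb x, Phat a x z * visitsGE a y (n+1) t z := by
  rw [show visitsGE a y (n+1) (t+1) x = if x = y
      then ∑' z, Phat a x z * visitsGE a y n t z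
      else ∑' z, Phat a x z * visitsGE a y (n+1) t z from rfl]
  congr 1 <;> exact tsum_phat_mul x _

omit ha in
lemma v_gt {m t : ℕ} (hmt : t < m) (x : Z2) : visitsGE a y (m+1) t x = 0 := by
  induction t generalizing m x with
  | zero =>
      rw [v_succ_zero, if_neg]
      rintro ⟨-, rfl⟩
      omega
  | succ t ih =>
      obtain ⟨m', rfl⟩ : ∃ m', m = m' + 1 := ⟨m - 1, by omega⟩
      rw [v_succ_succ]
      split
      · apply Finset.sum_eq_zero
        intro z _
        rw [ih (by omega), mul_zero]
      · apply Finset.sum_eq_zero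
        intro z _
        rw [ih (by omega), mul_zero]

include ha

lemma v_nonneg (n t : ℕ) (x : Z2) : 0 ≤ visitsGE a y n t x := by
  induction t generalizing n x with
  | zero =>
      cases n with
      | zero => rw [v_zero]; norm_num
      | succ n => rw [v_succ_zero]; split <;> norm_num
  | succ t ih =>
      cases n with
      | zero => rw [v_zero]; norm_num
      | succ n =>
          rw [v_succ_succ]
          split <;>
            exact Finset.sum_nonneg fun z _ => mul_nonneg (Phat_nonneg ha x z) (ih _ z)

lemma v_le_one (n t : ℕ) (x : Z2) : visitsGE a y n t x ≤ 1 := by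
  induction t generalizing n x with
  | zero =>
      cases n with
      | zero => rw [v_zero]
      | succ n => rw [v_succ_zero]; split <;> norm_num
  | succ t ih =>
      cases n with
      | zero => rw [v_zero]
      | succ n =>
          rw [v_succ_succ]
          have hb : ∀ m, ∑ z ∈ nb x, Phat a x z * visitsGE a y m t z ≤ 1 := by
            intro m
            calc ∑ z ∈ nb x, Phat a x z * visitsGE a y m t z
                ≤ ∑ z ∈ nb x, Phat a x z * 1 :=
                  Finset.sum_le_sum fun z _ =>
                    mul_le_mul_of_nonneg_left (ih m z) (Phat_nonneg ha x z)
              _ = ∑ z ∈ nb x, Phat a x z := by simp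
              _ ≤ 1 := Phat_rowsum_le ha x
          split <;> exact hb _

lemma v_mono_succ (hy : y ≠ 0) (n t : ℕ) (x : Z2) :
    visitsGE a y n t x ≤ visitsGE a y n (t+1) x := by
  induction t generalizing n x with
  | zero =>
      cases n with
      | zero => rw [v_zero, v_zero]
      | succ n =>
          rw [v_succ_zero, v_succ_succ]
          split
          · rename_i h
            obtain ⟨hxy, hn0⟩ := h
            subst hn0
            rw [if_pos hxy]
            have hc : ∀ z ∈ nb x, Phat a x z * visitsGE a y 0 0 z = Phat a x z := by
              intro z _; rw [v_zero, mul_one]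
            rw [Finset.sum_congr rfl hc, hxy, Phat_rowsum ha hy]
            
          · split
            · exact Finset.sum_nonneg fun z _ =>
                mul_nonneg (Phat_nonneg ha x z) (v_nonneg ha _ _ z)
            · exact Finset.sum_nonneg fun z _ =>
                mul_nonneg (Phat_nonneg ha x z) (v_nonneg ha _ _ z)
  | succ t ih =>
      cases n with
      | zero => rw [v_zero, v_zero]
      | succ n =>
          rw [v_succ_succ, v_succ_succ]
          split <;> exact Finset.sum_le_sum fun z _ =>
            mul_le_mul_of_nonneg_left (ih _ z) (Phat_nonneg ha x z)

lemma v_mono (hy : y ≠ 0) (n : ℕ) {s t : ℕ} (hst : s ≤ t) (x : Z2) :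
    visitsGE a y n s x ≤ visitsGE a y n t x := by
  induction t, hst using Nat.le_induction with
  | base => exact le_refl _
  | succ t hst ih => exact le_trans ih (v_mono_succ ha hy n t x)

lemma vL (hy : y ≠ 0) (m : ℕ) (s : ℕ) : ∀ t, ∀ z : Z2,
    hitLE a {y} t z * visitsGE a y (m+1) s y ≤ visitsGE a y (m+1) (t + s) z := by
  intro t
  induction t with
  | zero =>
      intro z
      rw [hitLE_zero]
      by_cases hz : z = y
      · rw [if_pos (by simpa using hz), hz, one_mul, zero_add]
      · rw [if_neg (by simpa using hz), zero_mul]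
        exact v_nonneg ha _ _ z
  | succ t ih =>
      intro z
      by_cases hz : z = y
      · rw [hz, hitLE_mem _ _ (by simp), one_mul]
        exact v_mono ha hy (m+1) (show s ≤ t + 1 + s by omega) y
      · rw [hitLE_succ, if_neg (by simpa using hz)]
        have hts : t + 1 + s = (t + s) + 1 := by omega
        rw [hts, v_succ_succ, if_neg hz, Finset.sum_mul]
        apply Finset.sum_le_sum
        intro w _
        rw [mul_assoc]
        exact mul_le_mul_of_nonneg_left (ih w) (Phat_nonneg ha z w)

end VisitLayer
section Quant

variable {a : Z2 → ℝ} (ha : IsPotentialKernel a) {y : Z2}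

lemma retLE_zero (A : Set Z2) (x : Z2) : retLE a A 0 x = 0 := rfl

include ha

lemma retLE_nonneg (A : Set Z2) (n : ℕ) (x : Z2) : 0 ≤ retLE a A n x := by
  cases n with
  | zero => rw [retLE_zero]
  | succ n =>
      rw [retLE_succ]
      exact Finset.sum_nonneg fun z _ =>
        mul_nonneg (Phat_nonneg ha x z) (hitLE_nonneg ha A n z)

lemma vpow (hy : y ≠ 0) (t : ℕ) (ht : 1 ≤ t) (m : ℕ) :
    (retLE a {y} t y)^m ≤ visitsGE a y (m+1) (m*t) y := by
  induction m with
  | zero =>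
      rw [pow_zero, Nat.zero_mul, v_succ_zero, if_pos ⟨rfl, rfl⟩]
  | succ m ih =>
      obtain ⟨t', rfl⟩ : ∃ t', t = t' + 1 := ⟨t - 1, by omega⟩
      have hrw : (m+1)*(t'+1) = (m*(t'+1) + t') + 1 := by ring
      rw [hrw, v_succ_succ, if_pos rfl]
      have hR : retLE a {y} (t'+1) y = ∑ z ∈ nb y, Phat a y z * hitLE a {y} t' z :=
        retLE_succ _ _ _
      calc (retLE a {y} (t'+1) y)^(m+1)
          = (∑ z ∈ nb y, Phat a y z * hitLE a {y} t' z) * (retLE a {y} (t'+1) y)^m := by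
            rw [pow_succ, mul_comm ((retLE a {y} (t'+1) y)^m), hR]
        _ = ∑ z ∈ nb y, Phat a y z * (hitLE a {y} t' z * (retLE a {y} (t'+1) y)^m) := by
            rw [Finset.sum_mul]
            apply Finset.sum_congr rfl
            intro z _
            ring
        _ ≤ ∑ z ∈ nb y, Phat a y z * visitsGE a y (m+1) (m*(t'+1) + t') z := by
            apply Finset.sum_le_sum
            intro z _
            apply mul_le_mul_of_nonneg_left _ (Phat_nonneg ha y z)
            have h1 : hitLE a {y} t' z * (retLE a {y} (t'+1) y)^m
                ≤ hitLE a {y} t' z * visitsGE a y (m+1) (m*(t'+1)) y :=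
              mul_le_mul_of_nonneg_left ih (hitLE_nonneg ha _ t' z)
            have h2 := vL ha hy m (m*(t'+1)) t' z
            rw [show t' + m*(t'+1) = m*(t'+1) + t' by omega] at h2
            exact le_trans h1 h2

lemma v_sum_le (t : ℕ) (x : Z2) :
    ∑ m ∈ Finset.range (t+1), visitsGE a y (m+1) t x
      ≤ ∑ n ∈ Finset.range (t+1), phat a n x y := by
  induction t generalizing x with
  | zero =>
      rw [Finset.sum_range_one, Finset.sum_range_one, v_succ_zero,
        show phat a 0 x y = if x = y then 1 else 0 from rfl]
      by_cases hxy : x = y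
      · rw [if_pos ⟨hxy, rfl⟩, if_pos hxy]
      · rw [if_neg (fun h => hxy h.1), if_neg hxy]
  | succ t ih =>
      have hGle : ∑ z ∈ nb x, Phat a x z * (∑ m ∈ Finset.range (t+1), visitsGE a y (m+1) t z)
          ≤ ∑ n ∈ Finset.range (t+1), phat a (n+1) x y := by
        calc ∑ z ∈ nb x, Phat a x z * (∑ m ∈ Finset.range (t+1), visitsGE a y (m+1) t z)
            ≤ ∑ z ∈ nb x, Phat a x z * (∑ n ∈ Finset.range (t+1), phat a n z y) :=
              Finset.sum_le_sum fun z _ =>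
                mul_le_mul_of_nonneg_left (ih z) (Phat_nonneg ha x z)
          _ = ∑ n ∈ Finset.range (t+1), ∑ z ∈ nb x, Phat a x z * phat a n z y := by
              rw [Finset.sum_comm]
              apply Finset.sum_congr rfl
              intro z _
              rw [Finset.mul_sum]
          _ = ∑ n ∈ Finset.range (t+1), phat a (n+1) x y := by
              apply Finset.sum_congr rfl
              intro n _
              rw [phat_succ_sum]
      have hRHS : ∑ n ∈ Finset.range (t+1+1), phat a n x y
          = ∑ n ∈ Finset.range (t+1), phat a (n+1) x y + (if x = y then 1 else 0) := by
        rw [Finset.sum_range_succ']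
        rfl
      by_cases hxy : x = y
      · have hLHS : ∀ m ∈ Finset.range (t+2), visitsGE a y (m+1) (t+1) x
            = ∑ z ∈ nb x, Phat a x z * visitsGE a y m t z := by
          intro m _
          rw [v_succ_succ, if_pos hxy]
        rw [Finset.sum_congr rfl hLHS, Finset.sum_comm]
        have hinner : ∀ z ∈ nb x, ∑ m ∈ Finset.range (t+2), Phat a x z * visitsGE a y m t z
            = Phat a x z * (∑ m ∈ Finset.range (t+1), visitsGE a y (m+1) t z) + Phat a x z := by
          intro z _
          rw [← Finset.mul_sum, Finset.sum_range_succ', v_zero]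
          ring
        rw [Finset.sum_congr rfl hinner, Finset.sum_add_distrib]
        rw [hRHS, if_pos hxy]
        have := Phat_rowsum_le ha x
        linarith [hGle]
      · have hLHS : ∀ m ∈ Finset.range (t+2), visitsGE a y (m+1) (t+1) x
            = ∑ z ∈ nb x, Phat a x z * visitsGE a y (m+1) t z := by
          intro m _
          rw [v_succ_succ, if_neg hxy]
        rw [Finset.sum_congr rfl hLHS, Finset.sum_comm]
        have hinner : ∀ z ∈ nb x, ∑ m ∈ Finset.range (t+2), Phat a x z * visitsGE a y (m+1) t z
            = Phat a x z * (∑ m ∈ Finset.range (t+1), visitsGE a y (m+1) t z) := by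
          intro z _
          rw [← Finset.mul_sum, Finset.sum_range_succ _ (t+1), v_gt (by omega), add_zero]
        rw [Finset.sum_congr rfl hinner, hRHS, if_neg hxy]
        linarith [hGle]

lemma retLE_le_beta (hy : y ≠ 0) :
    ∃ β : ℝ, 0 ≤ β ∧ β < 1 ∧ ∀ t, retLE a {y} t y ≤ β := by
  obtain ⟨K, hK1, hK⟩ := green_y ha y hy
  set c : ℝ := 1/(2*K) with hc
  have hKpos : (0:ℝ) < K := by linarith
  have hcpos : 0 < c := by rw [hc]; positivity
  have hchalf : c ≤ 1/2 := by
    rw [hc]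
    rw [div_le_div_iff₀ (by linarith) (by norm_num)]
    linarith
  have hKc : K * c = 1/2 := by
    rw [hc]
    field_simp
  refine ⟨1 - c, by linarith, by linarith, ?_⟩
  intro t
  cases t with
  | zero => rw [retLE_zero]; linarith
  | succ t' =>
      set t := t' + 1 with htdef
      by_contra hcon
      push_neg at hcon
      set r : ℝ := retLE a {y} t y with hr
      have hβ0 : (0:ℝ) ≤ 1 - c := by linarith
      have hβ1 : (1:ℝ) - c < 1 := by linarith
      obtain ⟨M, hM⟩ : ∃ M, (1 - c)^(M+1) < 1/2 := by
        obtain ⟨M0, hM0⟩ := exists_pow_lt_of_lt_one (show (0:ℝ) < 1/2 by norm_num) hβ1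
        refine ⟨M0, lt_of_le_of_lt ?_ hM0⟩
        rw [pow_succ]
        nlinarith [pow_nonneg hβ0 M0]
      -- the geometric partial sum exceeds K...
      have hgeom : ∑ m ∈ Finset.range (M+1), (1-c)^m = (1 - (1-c)^(M+1)) / c := by
        have := geom_sum_mul (1-c) (M+1)
        have hcne : c ≠ 0 := ne_of_gt hcpos
        field_simp
        linarith [this]
      have hKlt : K < ∑ m ∈ Finset.range (M+1), (1-c)^m := by
        rw [hgeom, lt_div_iff₀ hcpos, hKc]
        linarith
      -- ...but it is also at most K
      have hle1 : ∑ m ∈ Finset.range (M+1), (1-c)^m ≤ ∑ m ∈ Finset.range (M+1), r^m :=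
        Finset.sum_le_sum fun m _ => pow_le_pow_left₀ hβ0 (le_of_lt hcon) m
      have hle2 : ∑ m ∈ Finset.range (M+1), r^m
          ≤ ∑ m ∈ Finset.range (M+1), visitsGE a y (m+1) (M*t) y := by
        apply Finset.sum_le_sum
        intro m hm
        calc r^m ≤ visitsGE a y (m+1) (m*t) y := vpow ha hy t (by omega) m
          _ ≤ visitsGE a y (m+1) (M*t) y := by
              apply v_mono ha hy
              apply Nat.mul_le_mul_right
              simp only [Finset.mem_range] at hm
              omega
      have hle3 : ∑ m ∈ Finset.range (M+1), visitsGE a y (m+1) (M*t) y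
          ≤ ∑ m ∈ Finset.range (M*t+1), visitsGE a y (m+1) (M*t) y := by
        apply Finset.sum_le_sum_of_subset_of_nonneg
        · apply Finset.range_subset_range.2
          have : M * 1 ≤ M * t := Nat.mul_le_mul_left M (by omega)
          omega
        · intro m _ _
          exact v_nonneg ha _ _ y
      have hle4 := v_sum_le ha (y := y) (M*t) y
      have hle5 := hK (M*t)
      linarith

end Quant

section MainProof

variable {a : Z2 → ℝ} (ha : IsPotentialKernel a)

lemma v_y_zero : ∀ (t : ℕ) (x : Z2), x ≠ 0 → ∀ n, visitsGE a 0 (n+1) t x = 0 := by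
  intro t
  induction t with
  | zero =>
      intro x hx n
      rw [v_succ_zero, if_neg (fun h => hx h.1)]
  | succ t ih =>
      intro x hx n
      rw [v_succ_succ, if_neg hx]
      apply Finset.sum_eq_zero
      intro z _
      by_cases hz : z = 0
      · rw [hz, Phat_zero_right, zero_mul]
      · rw [ih z hz n, mul_zero]

include ha

lemma sum_Phat_hitProb_le (y : Z2) {β : ℝ} (hret : ∀ t, retLE a {y} t y ≤ β) :
    ∑ w ∈ nb y, Phat a y w * hitProb a {y} w ≤ β := by
  have t2 : Tendsto (fun n => ∑ w ∈ nb y, Phat a y w * hitLE a {y} n w) atTop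
      (nhds (∑ w ∈ nb y, Phat a y w * hitProb a {y} w)) := by
    apply tendsto_finset_sum
    intro w _
    exact (hitProb_tendsto ha {y} w).const_mul _
  apply le_of_tendsto t2
  apply Filter.Eventually.of_forall
  intro n
  rw [← retLE_succ]
  exact hret (n+1)

end MainProof
/-- the conditioned walk is transient: started from any `x ≠ 0`, it visits any
fixed site `y` only finitely many times a.s., i.e. `P_x[# visits to y ≥ n] → 0` as `n → ∞`. -/
theorem hatS_transient (a : Z2 → ℝ) (ha : IsPotentialKernel a) :
    ∀ x : Z2, x ≠ 0 → ∀ y : Z2,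
      Tendsto (fun n : ℕ => ⨆ t : ℕ, visitsGE a y n t x) atTop (nhds 0) := by
  intro x hx y
  by_cases hy : y = 0
  · subst hy
    apply Filter.Tendsto.congr' _ (tendsto_const_nhds (x := (0:ℝ)))
    filter_upwards [Filter.eventually_ge_atTop 1] with n hn
    obtain ⟨m, rfl⟩ : ∃ m, n = m + 1 := ⟨n - 1, by omega⟩
    have hfn : (fun t => visitsGE a 0 (m+1) t x) = fun _ => (0:ℝ) :=
      funext fun t => v_y_zero t x hx m
    rw [hfn, ciSup_const]
  · obtain ⟨β, hβ0, hβ1, hret⟩ := retLE_le_beta ha hy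
    have hPβ := sum_Phat_hitProb_le ha y hret
    have hmemy : y ∈ ({y} : Set Z2) := rfl
    have C : ∀ n t (z : Z2), visitsGE a y (n+1) t z ≤ hitProb a {y} z * β^n := by
      intro n
      induction n with
      | zero =>
          intro t
          induction t with
          | zero =>
              intro z
              rw [v_succ_zero, pow_zero, mul_one]
              by_cases hz : z = y
              · rw [if_pos ⟨hz, rfl⟩, hz, hitProb_mem ha {y} hmemy]
              · rw [if_neg (fun h => hz h.1)]
                exact hitProb_nonneg ha {y} z
          | succ t iht =>
              intro z
              rw [v_succ_succ, pow_zero, mul_one]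
              by_cases hz : z = y
              · rw [if_pos hz, hz, hitProb_mem ha {y} hmemy]
                have hc : ∀ w ∈ nb y, Phat a y w * visitsGE a y 0 t w = Phat a y w := by
                  intro w _; rw [v_zero, mul_one]
                rw [Finset.sum_congr rfl hc]
                exact Phat_rowsum_le ha y
              · rw [if_neg hz]
                calc ∑ w ∈ nb z, Phat a z w * visitsGE a y (0+1) t w
                    ≤ ∑ w ∈ nb z, Phat a z w * hitProb a {y} w := by
                      apply Finset.sum_le_sum
                      intro w _
                      apply mul_le_mul_of_nonneg_left _ (Phat_nonneg ha z w)
                      have := iht w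
                      rwa [pow_zero, mul_one] at this
                  _ = hitProb a {y} z :=
                      (hitProb_harm ha {y} (by simpa using hz)).symm
      | succ n ihn =>
          intro t
          induction t with
          | zero =>
              intro z
              rw [v_succ_zero, if_neg (fun h => by exact absurd h.2 (by omega))]
              exact mul_nonneg (hitProb_nonneg ha {y} z) (pow_nonneg hβ0 _)
          | succ t iht =>
              intro z
              rw [v_succ_succ]
              by_cases hz : z = y
              · rw [if_pos hz, hz, hitProb_mem ha {y} hmemy, one_mul]
                calc ∑ w ∈ nb y, Phat a y w * visitsGE a y (n+1) t w
                    ≤ ∑ w ∈ nb y, Phat a y w * (hitProb a {y} w * β^n) :=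
                      Finset.sum_le_sum fun w _ =>
                        mul_le_mul_of_nonneg_left (ihn t w) (Phat_nonneg ha y w)
                  _ = (∑ w ∈ nb y, Phat a y w * hitProb a {y} w) * β^n := by
                      rw [Finset.sum_mul]
                      apply Finset.sum_congr rfl
                      intro w _
                      ring
                  _ ≤ β * β^n := mul_le_mul_of_nonneg_right hPβ (pow_nonneg hβ0 n)
                  _ = β^(n+1) := by rw [pow_succ]; ring
              · rw [if_neg hz]
                calc ∑ w ∈ nb z, Phat a z w * visitsGE a y (n+1+1) t w
                    ≤ ∑ w ∈ nb z, Phat a z w * (hitProb a {y} w * β^(n+1)) :=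
                      Finset.sum_le_sum fun w _ =>
                        mul_le_mul_of_nonneg_left (iht w) (Phat_nonneg ha z w)
                  _ = (∑ w ∈ nb z, Phat a z w * hitProb a {y} w) * β^(n+1) := by
                      rw [Finset.sum_mul]
                      apply Finset.sum_congr rfl
                      intro w _
                      ring
                  _ = hitProb a {y} z * β^(n+1) := by
                      rw [← hitProb_harm ha {y} (by simpa using hz)]
    have bdd : ∀ n, BddAbove (Set.range fun t => visitsGE a y n t x) := fun n =>
      ⟨1, by rintro r ⟨t, rfl⟩; exact v_le_one ha n t x⟩
    have hub : ∀ m : ℕ, (⨆ t, visitsGE a y (m+1) t x) ≤ β^m := by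
      intro m
      apply ciSup_le
      intro t
      refine le_trans (C m t x) ?_
      have h1 := hitProb_le_one ha {y} x
      have h2 := hitProb_nonneg ha {y} x
      have hb := pow_nonneg hβ0 m
      nlinarith
    have hlb : ∀ n, 0 ≤ ⨆ t, visitsGE a y n t x := fun n =>
      le_trans (v_nonneg ha n 0 x) (le_ciSup (bdd n) 0)
    have h1 : Tendsto (fun m : ℕ => ⨆ t, visitsGE a y (m+1) t x) atTop (nhds 0) :=
      squeeze_zero (fun m => hlb (m+1)) hub
        (tendsto_pow_atTop_nhds_zero_of_lt_one hβ0 hβ1)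
    exact (Filter.tendsto_add_atTop_iff_nat 1).mp h1
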